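/- Let (L, R, Δ) be a natural weak factorisation system on C. Given L-coalgebras (f, s) : X → Y and (g, t) : Y → Z, define u : Z → E(gf) as the composite π_{gf} ∘ E(E(1, g), 1) ∘ E(s, 1) ∘ t. Then (gf, u) is an L-coalgebra, and this composition law, together with the unique coalgebra structures on identities, makes the objects of C and L-coalgebras between them into a category C_L with an identity-on-objects forgetful functor C_L → C. -/

import Mathlib

open CategoryTheory CategoryTheory.Limits

universe v u

/-- A natural weak factorisation system on `C`, in reduced form: a functorial factorisation
`(E, λ, ρ)` together with natural families `σ_f : Ef ⟶ ELf` and `π_f : ERf ⟶ Ef`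
satisfying the equations (nwfs1) and the distributivity equation (nwfs2). -/
structure ReducedNWFS (C : Type u) [Category.{v} C] where
  E : Arrow C ⥤ C
  l : (Arrow.leftFunc : Arrow C ⥤ C) ⟶ E
  r : E ⟶ (Arrow.rightFunc : Arrow C ⥤ C)
  fact : ∀ f : Arrow C, l.app f ≫ r.app f = f.hom
  σ : ∀ f : Arrow C, E.obj f ⟶ E.obj (Arrow.mk (l.app f))
  π : ∀ f : Arrow C, E.obj (Arrow.mk (r.app f)) ⟶ E.obj f
  σ_l : ∀ f : Arrow C, l.app f ≫ σ f = l.app (Arrow.mk (l.app f))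
  π_r : ∀ f : Arrow C, π f ≫ r.app f = r.app (Arrow.mk (r.app f))
  σ_natural : ∀ {f g : Arrow C} (sq : f ⟶ g),
    E.map sq ≫ σ g =
      σ f ≫ E.map (Arrow.homMk (f := Arrow.mk (l.app f)) (g := Arrow.mk (l.app g))
        (u := sq.left) (v := E.map sq) (l.naturality sq))
  π_natural : ∀ {f g : Arrow C} (sq : f ⟶ g),
    E.map (Arrow.homMk (f := Arrow.mk (r.app f)) (g := Arrow.mk (r.app g))
        (u := E.map sq) (v := sq.right) (r.naturality sq)) ≫ π g =
      π f ≫ E.map sq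
  eq1 : ∀ f : Arrow C, σ f ≫ r.app (Arrow.mk (l.app f)) = 𝟙 (E.obj f)
  eq2 : ∀ f : Arrow C, l.app (Arrow.mk (r.app f)) ≫ π f = 𝟙 (E.obj f)
  eq3 : ∀ f : Arrow C,
    σ f ≫ E.map (Arrow.homMk (f := Arrow.mk (l.app f)) (g := f) (u := 𝟙 f.left)
      (v := r.app f) ((Category.id_comp f.hom).trans (fact f).symm)) = 𝟙 (E.obj f)
  eq4 : ∀ f : Arrow C,
    E.map (Arrow.homMk (f := f) (g := Arrow.mk (r.app f)) (u := l.app f)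
      (v := 𝟙 f.right) ((fact f).trans (Category.comp_id f.hom).symm)) ≫ π f = 𝟙 (E.obj f)
  eq5 : ∀ f : Arrow C,
    σ f ≫ E.map (Arrow.homMk (f := Arrow.mk (l.app f))
        (g := Arrow.mk (l.app (Arrow.mk (l.app f)))) (u := 𝟙 f.left) (v := σ f)
        ((Category.id_comp _).trans (σ_l f).symm)) =
      σ f ≫ σ (Arrow.mk (l.app f))
  eq6 : ∀ f : Arrow C,
    E.map (Arrow.homMk (f := Arrow.mk (r.app (Arrow.mk (r.app f))))
        (g := Arrow.mk (r.app f)) (u := π f) (v := 𝟙 f.right)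
        ((π_r f).trans (Category.comp_id _).symm)) ≫ π f =
      π (Arrow.mk (r.app f)) ≫ π f
  distrib : ∀ f : Arrow C,
    π f ≫ σ f =
      σ (Arrow.mk (r.app f)) ≫
        E.map (Arrow.homMk (f := Arrow.mk (l.app (Arrow.mk (r.app f))))
            (g := Arrow.mk (r.app (Arrow.mk (l.app f)))) (u := σ f) (v := π f)
            ((eq1 f).trans (eq2 f).symm)) ≫
          π (Arrow.mk (l.app f))

variable {C : Type u} [Category.{v} C]

/-- An `L`-coalgebra structure on an arrow `f` for (the comonad part of) a natural weak
factorisation system: `s : cod f ⟶ Ef` with `s ∘ f = λ_f`, `ρ_f ∘ s = id` and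
`σ_f ∘ s = E(1, s) ∘ s`. -/
structure IsLCoalg (N : ReducedNWFS C) (f : Arrow C) (s : f.right ⟶ N.E.obj f) : Prop where
  straight : f.hom ≫ s = N.l.app f
  counit : s ≫ N.r.app f = 𝟙 f.right
  comul : s ≫ N.σ f =
    s ≫ N.E.map (Arrow.homMk (f := f) (g := Arrow.mk (N.l.app f)) (u := 𝟙 f.left)
      (v := s) ((Category.id_comp _).trans straight.symm))

/-- The composite coalgebra structure `u = π_{gf} ∘ E(E(1, g), 1) ∘ E(s, 1) ∘ t` on `g ∘ f`
built from `L`-coalgebra structures `s` on `f` and `t` on `g`. -/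
def compCoalg (N : ReducedNWFS C) {X Y Z : C} (f : X ⟶ Y) (g : Y ⟶ Z)
    (s : Y ⟶ N.E.obj (Arrow.mk f)) (t : Z ⟶ N.E.obj (Arrow.mk g))
    (hs : s ≫ N.r.app (Arrow.mk f) = 𝟙 Y) : Z ⟶ N.E.obj (Arrow.mk (f ≫ g)) :=
  t ≫
    N.E.map (Arrow.homMk (f := Arrow.mk g) (g := Arrow.mk (N.r.app (Arrow.mk f) ≫ g))
      (u := s) (v := 𝟙 Z) (by exact ((Category.comp_id g).trans ((Category.id_comp g).symm.trans
        ((congrArg (fun k => k ≫ g) hs).symm.trans (Category.assoc _ _ _)))).symm)) ≫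
    N.E.map (Arrow.homMk (f := Arrow.mk (N.r.app (Arrow.mk f) ≫ g))
      (g := Arrow.mk (N.r.app (Arrow.mk (f ≫ g))))
      (u := N.E.map (Arrow.homMk (f := Arrow.mk f) (g := Arrow.mk (f ≫ g))
        (u := 𝟙 X) (v := g) (by simp)))
      (v := 𝟙 Z) (by exact (N.r.naturality (Arrow.homMk (f := Arrow.mk f)
        (g := Arrow.mk (f ≫ g)) (u := 𝟙 X) (v := g) (by simp))).trans (Category.comp_id _).symm)) ≫
    N.π (Arrow.mk (f ≫ g))

section Helpers

variable (N : ReducedNWFS C)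

private lemma l_nat {a b : Arrow C} (sq : a ⟶ b) :
    sq.left ≫ N.l.app b = N.l.app a ≫ N.E.map sq := N.l.naturality sq

private lemma r_nat {a b : Arrow C} (sq : a ⟶ b) :
    N.E.map sq ≫ N.r.app b = N.r.app a ≫ sq.right := N.r.naturality sq

private lemma Emap_comp_eq {a b c : Arrow C} (sq₁ : a ⟶ b) (sq₂ : b ⟶ c) (sq₃ : a ⟶ c)
    (h1 : sq₁.left ≫ sq₂.left = sq₃.left) (h2 : sq₁.right ≫ sq₂.right = sq₃.right) :
    N.E.map sq₁ ≫ N.E.map sq₂ = N.E.map sq₃ := by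
  rw [← N.E.map_comp]
  exact congrArg _ (Arrow.hom_ext _ _ h1 h2)

private lemma Emap_congr {a b : Arrow C} (sq sq' : a ⟶ b) (h1 : sq.left = sq'.left)
    (h2 : sq.right = sq'.right) : N.E.map sq = N.E.map sq' :=
  congrArg _ (Arrow.hom_ext _ _ h1 h2)

private lemma arrow_eqToHom_left {a b : Arrow C} (hab : a = b) :
    (eqToHom hab).left = eqToHom (congrArg Comma.left hab) := by cases hab; rfl

private lemma arrow_eqToHom_right {a b : Arrow C} (hab : a = b) :
    (eqToHom hab).right = eqToHom (congrArg Comma.right hab) := by cases hab; rfl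

variable {X Y Z : C} (f : X ⟶ Y) (g : Y ⟶ Z)

/-- the square `(1, g) : f ⟶ f ≫ g`. -/
private def sqIG : Arrow.mk f ⟶ Arrow.mk (f ≫ g) :=
  Arrow.homMk' (u := 𝟙 X) (v := g) (by simp)

variable (s : Y ⟶ N.E.obj (Arrow.mk f)) (t : Z ⟶ N.E.obj (Arrow.mk g))

private lemma c_r (hs : s ≫ N.r.app (Arrow.mk f) = 𝟙 Y) :
    (s ≫ N.E.map (sqIG f g)) ≫ N.r.app (Arrow.mk (f ≫ g)) = g := by
  erw [Category.assoc, r_nat N (sqIG f g), ← Category.assoc, hs]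
  exact Category.id_comp _

/-- the square `(s ≫ E(1,g), 1) : g ⟶ ρ_{f≫g}`. -/
private def sqC (hs : s ≫ N.r.app (Arrow.mk f) = 𝟙 Y) :
    Arrow.mk g ⟶ Arrow.mk (N.r.app (Arrow.mk (f ≫ g))) :=
  Arrow.homMk' (u := s ≫ N.E.map (sqIG f g)) (v := 𝟙 Z)
    (by erw [c_r N f g s hs, Category.comp_id])

private lemma compCoalg_eq (hs : s ≫ N.r.app (Arrow.mk f) = 𝟙 Y) :
    compCoalg N f g s t hs =
      t ≫ N.E.map (sqC N f g s hs) ≫ N.π (Arrow.mk (f ≫ g)) := by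
  rw [compCoalg, ← Functor.map_comp_assoc]
  congr 1
  congr 1
  refine Emap_congr N _ _ ?_ ?_
  · simp only [Comma.comp_left, Arrow.homMk_left, sqC, Arrow.homMk'_left]
    exact congrArg (s ≫ ·) (Emap_congr N _ _ rfl rfl)
  · exact Category.id_comp _

private lemma straight' {a b : C} {k : a ⟶ b} {s : b ⟶ N.E.obj (Arrow.mk k)}
    (h : IsLCoalg N (Arrow.mk k) s) : k ≫ s = N.l.app (Arrow.mk k) := h.straight

private lemma counit' {a b : C} {k : a ⟶ b} {s : b ⟶ N.E.obj (Arrow.mk k)}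
    (h : IsLCoalg N (Arrow.mk k) s) : s ≫ N.r.app (Arrow.mk k) = 𝟙 b := h.counit

private lemma comp_straight (hs : IsLCoalg N (Arrow.mk f) s) (ht : IsLCoalg N (Arrow.mk g) t) :
    (f ≫ g) ≫ compCoalg N f g s t hs.counit = N.l.app (Arrow.mk (f ≫ g)) := by
  rw [compCoalg_eq]
  calc (f ≫ g) ≫ t ≫ N.E.map (sqC N f g s hs.counit) ≫ N.π (Arrow.mk (f ≫ g))
      = f ≫ (g ≫ t) ≫ N.E.map (sqC N f g s hs.counit) ≫ N.π (Arrow.mk (f ≫ g)) := by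
        simp only [Category.assoc]
    _ = f ≫ N.l.app (Arrow.mk g) ≫ N.E.map (sqC N f g s hs.counit) ≫
          N.π (Arrow.mk (f ≫ g)) := by rw [straight' N ht]
    _ = f ≫ (sqC N f g s hs.counit).left ≫
          N.l.app (Arrow.mk (N.r.app (Arrow.mk (f ≫ g)))) ≫ N.π (Arrow.mk (f ≫ g)) := by
        erw [← Category.assoc (N.l.app _), ← l_nat N (sqC N f g s hs.counit), Category.assoc]; rfl
    _ = f ≫ s ≫ N.E.map (sqIG f g) := by
        erw [N.eq2]; exact congrArg (f ≫ ·) (Category.comp_id _)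
    _ = (N.l.app (Arrow.mk f) ≫ N.E.map (sqIG f g) : X ⟶ N.E.obj (Arrow.mk (f ≫ g))) := by
        rw [← Category.assoc, straight' N hs]
    _ = (show X ⟶ N.E.obj (Arrow.mk (f ≫ g)) from N.l.app (Arrow.mk (f ≫ g))) := by
        erw [← l_nat N (sqIG f g)]; exact Category.id_comp _

private lemma comp_counit (hs : IsLCoalg N (Arrow.mk f) s) (ht : IsLCoalg N (Arrow.mk g) t) :
    compCoalg N f g s t hs.counit ≫ N.r.app (Arrow.mk (f ≫ g)) = 𝟙 Z := by
  rw [compCoalg_eq]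
  erw [Category.assoc, Category.assoc, N.π_r, r_nat N (sqC N f g s hs.counit),
    reassoc_of% counit' N ht]
  exact Category.id_comp _

private lemma g_comp_u (hs : IsLCoalg N (Arrow.mk f) s) (ht : IsLCoalg N (Arrow.mk g) t) :
    g ≫ compCoalg N f g s t hs.counit = s ≫ N.E.map (sqIG f g) := by
  rw [compCoalg_eq, ← Category.assoc, straight' N ht]
  erw [← Category.assoc (N.l.app _), ← l_nat N (sqC N f g s hs.counit), Category.assoc, N.eq2]
  exact Category.comp_id _

private lemma key (hs : IsLCoalg N (Arrow.mk f) s) (ht : IsLCoalg N (Arrow.mk g) t)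
    (q : Arrow.mk (f ≫ g) ⟶ Arrow.mk (N.l.app (Arrow.mk (f ≫ g))))
    (hq1 : q.left = 𝟙 X) (hq2 : q.right = compCoalg N f g s t hs.counit) :
    s ≫ N.E.map (sqIG f g) ≫ N.σ (Arrow.mk (f ≫ g)) =
      s ≫ N.E.map (sqIG f g) ≫ N.E.map q := by
  rw [N.σ_natural (sqIG f g), reassoc_of% hs.comul, ← N.E.map_comp, ← N.E.map_comp]
  congr 1
  refine Emap_congr N _ _ ?_ ?_
  · simp [sqIG, hq1, Arrow.comp_left]; rfl
  · simp only [Arrow.comp_right, Arrow.homMk_right, sqIG, Arrow.homMk'_right, hq2]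
    exact (g_comp_u N f g s t hs ht).symm

private lemma comp_comul (hs : IsLCoalg N (Arrow.mk f) s) (ht : IsLCoalg N (Arrow.mk g) t)
    (q : Arrow.mk (f ≫ g) ⟶ Arrow.mk (N.l.app (Arrow.mk (f ≫ g))))
    (hq1 : q.left = 𝟙 X) (hq2 : q.right = compCoalg N f g s t hs.counit) :
    compCoalg N f g s t hs.counit ≫ N.σ (Arrow.mk (f ≫ g)) =
      compCoalg N f g s t hs.counit ≫ N.E.map q := by
  rw [compCoalg_eq]
  simp only [Category.assoc]
  rw [N.distrib, reassoc_of% N.σ_natural (sqC N f g s hs.counit), reassoc_of% ht.comul,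
    ← N.π_natural q, ← Functor.map_comp_assoc, ← Functor.map_comp_assoc,
    ← Functor.map_comp_assoc]
  congr 2
  refine Emap_congr N _ _ ?_ ?_
  · simp only [Arrow.comp_left, Arrow.homMk_left, Category.id_comp, sqC, Arrow.homMk'_left,
      Category.assoc]
    refine (Category.id_comp _).trans ?_
    exact (Category.assoc _ _ _).trans ((key N f g s t hs ht q hq1 hq2).trans (Category.assoc _ _ _).symm)
  · simp [Arrow.comp_right, hq2, compCoalg_eq, sqC]
    exact (Category.id_comp _).symm

private lemma comp_isLCoalg (hs : IsLCoalg N (Arrow.mk f) s) (ht : IsLCoalg N (Arrow.mk g) t) :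
    IsLCoalg N (Arrow.mk (f ≫ g)) (compCoalg N f g s t hs.counit) :=
  ⟨comp_straight N f g s t hs ht, comp_counit N f g s t hs ht,
    comp_comul N f g s t hs ht _ rfl rfl⟩

private lemma id_isLCoalg (X : C) :
    IsLCoalg N (Arrow.mk (𝟙 X)) (N.l.app (Arrow.mk (𝟙 X))) := by
  refine ⟨Category.id_comp _, N.fact (Arrow.mk (𝟙 X)), ?_⟩
  erw [N.σ_l, ← l_nat N]
  exact (Category.id_comp _).symm

private lemma id_unique (X : C) (sX : X ⟶ N.E.obj (Arrow.mk (𝟙 X)))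
    (h : IsLCoalg N (Arrow.mk (𝟙 X)) sX) : sX = N.l.app (Arrow.mk (𝟙 X)) := by
  simpa using h.straight

private lemma left_unit {X Y : C} (f : X ⟶ Y) (sX : X ⟶ N.E.obj (Arrow.mk (𝟙 X)))
    (s : Y ⟶ N.E.obj (Arrow.mk f)) (hX : IsLCoalg N (Arrow.mk (𝟙 X)) sX)
    (hs : IsLCoalg N (Arrow.mk f) s) :
    compCoalg N (𝟙 X) f sX s hX.counit =
      s ≫ eqToHom (congrArg (fun q : X ⟶ Y => N.E.obj (Arrow.mk q))
        (Category.id_comp f).symm) := by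
  have hM : Arrow.mk f = Arrow.mk (𝟙 X ≫ f) := by rw [Category.id_comp]
  rw [compCoalg_eq]
  have hsq : sqC N (𝟙 X) f sX hX.counit =
      eqToHom hM ≫ Arrow.homMk (f := Arrow.mk (𝟙 X ≫ f))
        (g := Arrow.mk (N.r.app (Arrow.mk (𝟙 X ≫ f))))
        (u := N.l.app (Arrow.mk (𝟙 X ≫ f))) (v := 𝟙 (Arrow.mk (𝟙 X ≫ f)).right)
        ((N.fact _).trans (Category.comp_id _).symm) := by
    refine Arrow.hom_ext _ _ ?_ ?_
    · simp only [sqC, Arrow.homMk'_left, Arrow.comp_left, Arrow.homMk_left,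
        arrow_eqToHom_left]
      show sX ≫ N.E.map (sqIG (𝟙 X) f) = _ ≫ N.l.app (Arrow.mk (𝟙 X ≫ f))
      rw [id_unique N X sX hX]; erw [← l_nat N (sqIG (𝟙 X) f)]
      rfl
    · simp [sqC, Arrow.comp_right, arrow_eqToHom_right]; rfl
  rw [hsq, Functor.map_comp, eqToHom_map]
  simp only [Category.assoc]
  rw [N.eq4]
  simp

private lemma right_unit {X Y : C} (f : X ⟶ Y) (s : Y ⟶ N.E.obj (Arrow.mk f))
    (sY : Y ⟶ N.E.obj (Arrow.mk (𝟙 Y))) (hs : IsLCoalg N (Arrow.mk f) s)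
    (hY : IsLCoalg N (Arrow.mk (𝟙 Y)) sY) :
    compCoalg N f (𝟙 Y) s sY hs.counit =
      s ≫ eqToHom (congrArg (fun q : X ⟶ Y => N.E.obj (Arrow.mk q))
        (Category.comp_id f).symm) := by
  have hM : Arrow.mk f = Arrow.mk (f ≫ 𝟙 Y) := by rw [Category.comp_id]
  rw [compCoalg_eq, id_unique N Y sY hY]
  erw [← Category.assoc (N.l.app _), ← l_nat N (sqC N f (𝟙 Y) s hs.counit), Category.assoc, N.eq2]
  have hsq : sqIG f (𝟙 Y) = eqToHom hM := by
    refine Arrow.hom_ext _ _ ?_ ?_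
    · simp [sqIG, arrow_eqToHom_left]
    · simp [sqIG, arrow_eqToHom_right]
  simp only [sqC, Arrow.homMk'_left, hsq, eqToHom_map, Category.comp_id]
  simp
  exact Category.comp_id _

section Assoc

variable {W : C} (h : Z ⟶ W) (u : W ⟶ N.E.obj (Arrow.mk h))

private def sqIGK : Arrow.mk f ⟶ Arrow.mk ((f ≫ g) ≫ h) :=
  Arrow.homMk' (u := 𝟙 X) (v := g ≫ h) (by simp)

private def psiK (hs : s ≫ N.r.app (Arrow.mk f) = 𝟙 Y) :
    Arrow.mk g ⟶ Arrow.mk (N.r.app (Arrow.mk ((f ≫ g) ≫ h))) :=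
  Arrow.homMk' (u := s ≫ N.E.map (sqIGK f g h)) (v := h)
    (by erw [Category.assoc s, r_nat N (sqIGK f g h), ← Category.assoc s, hs]; exact Category.id_comp _)

private def phiK (hs : s ≫ N.r.app (Arrow.mk f) = 𝟙 Y)
    (ht : t ≫ N.r.app (Arrow.mk g) = 𝟙 Z) :
    Arrow.mk h ⟶ Arrow.mk (N.r.app (Arrow.mk (N.r.app (Arrow.mk ((f ≫ g) ≫ h))))) :=
  Arrow.homMk' (u := t ≫ N.E.map (psiK N f g s h hs)) (v := 𝟙 W)
    (by erw [Category.assoc t, r_nat N (psiK N f g s h hs), ← Category.assoc t, ht]; exact (Category.id_comp _).trans (Category.comp_id _).symm)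

private def psiM (hs : s ≫ N.r.app (Arrow.mk f) = 𝟙 Y) :
    Arrow.mk g ⟶ Arrow.mk (N.r.app (Arrow.mk (f ≫ g ≫ h))) :=
  Arrow.homMk' (u := s ≫ N.E.map (sqIG f (g ≫ h))) (v := h)
    (by erw [Category.assoc s, r_nat N (sqIG f (g ≫ h)), ← Category.assoc s, hs]; exact Category.id_comp _)

private def phiM (hs : s ≫ N.r.app (Arrow.mk f) = 𝟙 Y)
    (ht : t ≫ N.r.app (Arrow.mk g) = 𝟙 Z) :
    Arrow.mk h ⟶ Arrow.mk (N.r.app (Arrow.mk (N.r.app (Arrow.mk (f ≫ g ≫ h))))) :=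
  Arrow.homMk' (u := t ≫ N.E.map (psiM N f g s h hs)) (v := 𝟙 W)
    (by erw [Category.assoc t, r_nat N (psiM N f g s h hs), ← Category.assoc t, ht]; exact (Category.id_comp _).trans (Category.comp_id _).symm)

private lemma assocL (hs : IsLCoalg N (Arrow.mk f) s) (ht : IsLCoalg N (Arrow.mk g) t)
    (hT : compCoalg N f g s t hs.counit ≫ N.r.app (Arrow.mk (f ≫ g)) = 𝟙 Z) :
    compCoalg N (f ≫ g) h (compCoalg N f g s t hs.counit) u hT =
      u ≫ N.E.map (phiK N f g s t h hs.counit ht.counit) ≫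
        N.π (Arrow.mk (N.r.app (Arrow.mk ((f ≫ g) ≫ h)))) ≫ N.π (Arrow.mk ((f ≫ g) ≫ h)) := by
  rw [compCoalg_eq N (f ≫ g) h _ u hT]
  have hsplit : sqC N (f ≫ g) h (compCoalg N f g s t hs.counit) hT =
      phiK N f g s t h hs.counit ht.counit ≫
        Arrow.homMk (f := Arrow.mk (N.r.app (Arrow.mk (N.r.app (Arrow.mk ((f ≫ g) ≫ h))))))
          (g := Arrow.mk (N.r.app (Arrow.mk ((f ≫ g) ≫ h))))
          (u := N.π (Arrow.mk ((f ≫ g) ≫ h))) (v := 𝟙 _)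
          ((N.π_r _).trans (Category.comp_id _).symm) := by
    refine Arrow.hom_ext _ _ ?_ ?_
    · simp only [sqC, Arrow.homMk'_left, Arrow.comp_left, phiK, Arrow.homMk_left]
      show compCoalg N f g s t hs.counit ≫ N.E.map (sqIG (f ≫ g) h) =
        (t ≫ N.E.map (psiK N f g s h hs.counit)) ≫ N.π (Arrow.mk ((f ≫ g) ≫ h))
      rw [compCoalg_eq]
      simp only [Category.assoc]
      rw [← N.π_natural (sqIG (f ≫ g) h), ← Functor.map_comp_assoc]
      congr 2
      refine Emap_congr N _ _ ?_ ?_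
      · simp only [Arrow.comp_left, sqC, Arrow.homMk'_left, Arrow.homMk_left, psiK,
          Category.assoc]
        show (s ≫ N.E.map (sqIG f g)) ≫ N.E.map (sqIG (f ≫ g) h) = s ≫ N.E.map (sqIGK f g h)
        rw [Category.assoc s, ← N.E.map_comp]
        exact congrArg (s ≫ ·) (Emap_congr N _ _ (by simp [sqIG, sqIGK, Arrow.comp_left])
          (by simp [sqIG, sqIGK, Arrow.comp_right]))
      · simp [sqC, psiK, sqIG, Arrow.comp_right]
        exact Category.id_comp _
    · exact (Category.comp_id _).symm
  rw [hsplit, Functor.map_comp]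
  simp only [Category.assoc]
  erw [N.eq6]

private lemma assocR (hs : IsLCoalg N (Arrow.mk f) s) (ht : IsLCoalg N (Arrow.mk g) t) :
    compCoalg N f (g ≫ h) s (compCoalg N g h t u ht.counit) hs.counit =
      u ≫ N.E.map (phiM N f g s t h hs.counit ht.counit) ≫
        N.π (Arrow.mk (N.r.app (Arrow.mk (f ≫ g ≫ h)))) ≫ N.π (Arrow.mk (f ≫ g ≫ h)) := by
  rw [compCoalg_eq N f (g ≫ h) s _ hs.counit, compCoalg_eq N g h t u ht.counit]
  simp only [Category.assoc]
  rw [← reassoc_of% N.π_natural (sqC N f (g ≫ h) s hs.counit), ← Functor.map_comp_assoc]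
  congr 2
  refine Emap_congr N _ _ ?_ ?_
  · simp only [Arrow.comp_left, sqC, Arrow.homMk'_left, Arrow.homMk_left, phiM, psiM,
      Category.assoc]
    show (t ≫ N.E.map (sqIG g h)) ≫ N.E.map (sqC N f (g ≫ h) s hs.counit) =
      t ≫ N.E.map (psiM N f g s h hs.counit)
    rw [Category.assoc, ← N.E.map_comp]
    exact congrArg (t ≫ ·) (Emap_congr N _ _ (by simp [sqIG, Arrow.comp_left]; rfl)
      (by simp [sqIG, sqC, Arrow.comp_right]; exact Category.comp_id _))
  · exact Category.id_comp _

private lemma pi_pi_eqToHom {a b : Arrow C} (hab : a = b) (e : N.E.obj a = N.E.obj b)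
    (e2 : N.E.obj (Arrow.mk (N.r.app (Arrow.mk (N.r.app a)))) =
      N.E.obj (Arrow.mk (N.r.app (Arrow.mk (N.r.app b))))) :
    N.π (Arrow.mk (N.r.app a)) ≫ N.π a ≫ eqToHom e =
      eqToHom e2 ≫ N.π (Arrow.mk (N.r.app b)) ≫ N.π b := by
  cases hab; simp

private lemma assoc_law (hs : IsLCoalg N (Arrow.mk f) s) (ht : IsLCoalg N (Arrow.mk g) t)
    (hT : compCoalg N f g s t hs.counit ≫ N.r.app (Arrow.mk (f ≫ g)) = 𝟙 Z) :
    compCoalg N (f ≫ g) h (compCoalg N f g s t hs.counit) u hT =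
      compCoalg N f (g ≫ h) s (compCoalg N g h t u ht.counit) hs.counit ≫
        eqToHom (congrArg (fun q : X ⟶ W => N.E.obj (Arrow.mk q))
          (Category.assoc f g h).symm) := by
  have hKM : Arrow.mk (f ≫ g ≫ h) = Arrow.mk ((f ≫ g) ≫ h) := by rw [Category.assoc]
  have h1 : Arrow.mk (N.r.app (Arrow.mk (f ≫ g ≫ h))) =
      Arrow.mk (N.r.app (Arrow.mk ((f ≫ g) ≫ h))) := by rw [hKM]
  have h2 : Arrow.mk (N.r.app (Arrow.mk (N.r.app (Arrow.mk (f ≫ g ≫ h))))) =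
      Arrow.mk (N.r.app (Arrow.mk (N.r.app (Arrow.mk ((f ≫ g) ≫ h))))) := by rw [h1]
  rw [assocL N f g s t h u hs ht hT, assocR N f g s t h u hs ht]
  simp only [Category.assoc]
  rw [pi_pi_eqToHom N hKM (by rw [hKM]) (by rw [hKM])]
  have hsq1 : sqIG f (g ≫ h) ≫ eqToHom hKM = sqIGK f g h := by
    refine Arrow.hom_ext _ _ ?_ ?_
    · simp [sqIG, sqIGK, Arrow.comp_left, arrow_eqToHom_left]
    · simp [sqIG, sqIGK, Arrow.comp_right, arrow_eqToHom_right]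
  have hsq2 : psiM N f g s h hs.counit ≫ eqToHom h1 = psiK N f g s h hs.counit := by
    refine Arrow.hom_ext _ _ ?_ ?_
    · simp only [psiM, psiK, Arrow.homMk'_left, Arrow.comp_left, arrow_eqToHom_left,
        Category.assoc]
      show (s ≫ N.E.map (sqIG f (g ≫ h))) ≫ eqToHom (congrArg Comma.left h1) =
        s ≫ N.E.map (sqIGK f g h)
      rw [Category.assoc s, ← hsq1, Functor.map_comp, eqToHom_map]
    · simp [psiM, psiK, Arrow.comp_right, arrow_eqToHom_right]
      erw [eqToHom_refl, Category.comp_id]; rfl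
  have hsq3 : phiM N f g s t h hs.counit ht.counit ≫ eqToHom h2 =
      phiK N f g s t h hs.counit ht.counit := by
    refine Arrow.hom_ext _ _ ?_ ?_
    · simp only [phiM, phiK, Arrow.homMk'_left, Arrow.comp_left, arrow_eqToHom_left,
        Category.assoc]
      show (t ≫ N.E.map (psiM N f g s h hs.counit)) ≫ eqToHom (congrArg Comma.left h2) =
        t ≫ N.E.map (psiK N f g s h hs.counit)
      rw [Category.assoc t, ← hsq2, Functor.map_comp, eqToHom_map]
    · simp [phiM, phiK, Arrow.comp_right, arrow_eqToHom_right]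
      erw [eqToHom_refl, Category.comp_id]; rfl
  have hmap : N.E.map (phiK N f g s t h hs.counit ht.counit) =
      N.E.map (phiM N f g s t h hs.counit ht.counit) ≫ eqToHom (by rw [h2]) := by
    rw [← hsq3, Functor.map_comp, eqToHom_map]
  rw [hmap]
  simp only [Category.assoc]

end Assoc

end Helpers

/-- for a natural weak factorisation system `(L, R, Δ)` on `C`, the composite
`(gf, u)` of `L`-coalgebras `(f, s)` and `(g, t)` is again an `L`-coalgebra, and this
composition law, together with the unique coalgebra structures on identities, makes the
objects of `C` and the `L`-coalgebras between them into a category `C_L` (with an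
identity-on-objects forgetful functor to `C`). -/
theorem stmt17 (N : ReducedNWFS C) :
    -- composites of `L`-coalgebras are `L`-coalgebras
    (∀ {X Y Z : C} (f : X ⟶ Y) (g : Y ⟶ Z)
      (s : Y ⟶ N.E.obj (Arrow.mk f)) (t : Z ⟶ N.E.obj (Arrow.mk g))
      (hs : IsLCoalg N (Arrow.mk f) s), IsLCoalg N (Arrow.mk g) t →
        IsLCoalg N (Arrow.mk (f ≫ g)) (compCoalg N f g s t hs.counit)) ∧
    -- identities carry a unique `L`-coalgebra structure
    (∀ X : C, ∃! sX : X ⟶ N.E.obj (Arrow.mk (𝟙 X)), IsLCoalg N (Arrow.mk (𝟙 X)) sX) ∧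
    -- left and right unit laws for the composition
    (∀ {X Y : C} (f : X ⟶ Y) (sX : X ⟶ N.E.obj (Arrow.mk (𝟙 X)))
      (s : Y ⟶ N.E.obj (Arrow.mk f)) (hX : IsLCoalg N (Arrow.mk (𝟙 X)) sX),
      IsLCoalg N (Arrow.mk f) s →
        compCoalg N (𝟙 X) f sX s hX.counit =
          s ≫ eqToHom (congrArg (fun q : X ⟶ Y => N.E.obj (Arrow.mk q))
            (Category.id_comp f).symm)) ∧
    (∀ {X Y : C} (f : X ⟶ Y) (s : Y ⟶ N.E.obj (Arrow.mk f))
      (sY : Y ⟶ N.E.obj (Arrow.mk (𝟙 Y))) (hs : IsLCoalg N (Arrow.mk f) s),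
      IsLCoalg N (Arrow.mk (𝟙 Y)) sY →
        compCoalg N f (𝟙 Y) s sY hs.counit =
          s ≫ eqToHom (congrArg (fun q : X ⟶ Y => N.E.obj (Arrow.mk q))
            (Category.comp_id f).symm)) ∧
    -- associativity of the composition
    (∀ {X Y Z W : C} (f : X ⟶ Y) (g : Y ⟶ Z) (h : Z ⟶ W)
      (s : Y ⟶ N.E.obj (Arrow.mk f)) (t : Z ⟶ N.E.obj (Arrow.mk g))
      (u : W ⟶ N.E.obj (Arrow.mk h))
      (hs : IsLCoalg N (Arrow.mk f) s) (ht : IsLCoalg N (Arrow.mk g) t)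
      (hu : IsLCoalg N (Arrow.mk h) u)
      (hfg : IsLCoalg N (Arrow.mk (f ≫ g)) (compCoalg N f g s t hs.counit)),
      compCoalg N (f ≫ g) h (compCoalg N f g s t hs.counit) u hfg.counit =
        compCoalg N f (g ≫ h) s (compCoalg N g h t u ht.counit) hs.counit ≫
          eqToHom (congrArg (fun q : X ⟶ W => N.E.obj (Arrow.mk q))
            (Category.assoc f g h).symm)) := by
  
  refine ⟨?_, ?_, ?_, ?_, ?_⟩
  · intro X Y Z f g s t hs ht
    exact comp_isLCoalg N f g s t hs ht
  · intro X
    exact ⟨N.l.app (Arrow.mk (𝟙 X)), id_isLCoalg N X, fun y hy => id_unique N X y hy⟩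
  · intro X Y f sX s hX hs
    exact left_unit N f sX s hX hs
  · intro X Y f s sY hs hY
    exact right_unit N f s sY hs hY
  · intro X Y Z W f g h s t u hs ht hu hfg
    exact assoc_law N f g s t h u hs ht hfg.counit
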